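/- Let G be a finitely generated free abelian group of rank m and let Ω : G → G be a group endomorphism (more generally, let Ω be an endomorphism of an abelian group H with G ⊆ H and Ω(G) ⊆ G). Then there exists k ≤ m such that for all n ≥ k, the restriction of Ω to Ω^n(G), as a map Ω^n(G) → Ω^{n+1}(G), is injective. In other words, η_Ω(G) ≤ m where η_Ω(G) is the least such k. -/

import Mathlib

/-- If `G` is a subgroup of an abelian group, invariant under an endomorphism `Ω`,
and `G` is free abelian of rank `m`, then there is `k ≤ m` such that for all `n ≥ k`
the restriction of `Ω` to `Ω^n(G)` is injective; i.e. `η_Ω(G) ≤ m`. -/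
theorem stmt2 (H : Type*) [AddCommGroup H] (Ω : AddMonoid.End H) (G : AddSubgroup H)
    (hinv : ∀ x ∈ G, Ω x ∈ G) (m : ℕ) (b : Module.Basis (Fin m) ℤ G) :
    ∃ k ≤ m, ∀ n ≥ k, Set.InjOn Ω (AddSubgroup.map (Ω ^ n) G : Set H) := by
  classical
  -- the induced ℤ-linear endomorphism of G
  let φ : ↥G →ₗ[ℤ] ↥G :=
    { toFun := fun x => ⟨Ω x, hinv x x.2⟩
      map_add' := by intro x y; ext; simp
      map_smul' := by
        intro c x; ext
        simp [AddMonoidHom.map_zsmul] }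
  have hφpow : ∀ (n : ℕ) (x : ↥G), ((φ ^ n) x : H) = (Ω ^ n) x := by
    intro n
    induction n with
    | zero => intro x; simp
    | succ n ih =>
      intro x
      have h1 : (φ ^ (n+1)) x = (φ ^ n) (φ x) := by rw [pow_succ]; rfl
      have h2 : (Ω ^ (n+1)) x.1 = (Ω ^ n) (Ω x.1) := by rw [pow_succ]; rfl
      rw [h1, h2, ih (φ x)]
      rfl
  -- coordinates
  let e : ↥G ≃ₗ[ℤ] (Fin m → ℤ) :=
    b.repr.trans (Finsupp.linearEquivFunOnFinite ℤ ℤ (Fin m))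
  let ψ' : Module.End ℤ (Fin m → ℤ) := e.toLinearMap ∘ₗ φ ∘ₗ e.symm.toLinearMap
  let M : Matrix (Fin m) (Fin m) ℤ := LinearMap.toMatrix' ψ'
  let ψ : Module.End ℚ (Fin m → ℚ) := Matrix.toLin' (M.map (Int.cast : ℤ → ℚ))
  let incl : (Fin m → ℤ) → (Fin m → ℚ) := fun v i => (v i : ℚ)
  have hincl_inj : Function.Injective incl := by
    intro v w h
    funext i
    exact Int.cast_injective (show ((v i : ℚ)) = (w i : ℚ) from congrFun h i)
  have hcomm : ∀ v, ψ (incl v) = incl (ψ' v) := by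
    intro v
    have hψ' : ψ' v = M.mulVec v := by
      simp only [M, ← Matrix.toLin'_apply, Matrix.toLin'_toMatrix']
    rw [hψ']
    funext i
    simp only [ψ, Matrix.toLin'_apply, Matrix.mulVec, dotProduct, incl,
      Matrix.map_apply]
    push_cast
    rfl
  have hcommpow : ∀ (n : ℕ) (v), (ψ ^ n) (incl v) = incl ((ψ' ^ n) v) := by
    intro n
    induction n with
    | zero => intro v; simp
    | succ n ih =>
      intro v
      have h1 : (ψ ^ (n+1)) (incl v) = (ψ ^ n) (ψ (incl v)) := by rw [pow_succ]; rfl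
      have h2 : (ψ' ^ (n+1)) v = (ψ' ^ n) (ψ' v) := by rw [pow_succ]; rfl
      rw [h1, h2, hcomm, ih]
  have hψ'pow : ∀ (n : ℕ) (x : ↥G), (ψ' ^ n) (e x) = e ((φ ^ n) x) := by
    intro n
    induction n with
    | zero => intro x; simp
    | succ n ih =>
      intro x
      have h1 : (ψ' ^ (n+1)) (e x) = (ψ' ^ n) (ψ' (e x)) := by rw [pow_succ]; rfl
      have h2 : (φ ^ (n+1)) x = (φ ^ n) (φ x) := by rw [pow_succ]; rfl
      have h3 : ψ' (e x) = e (φ x) := by simp [ψ']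
      rw [h1, h2, h3, ih (φ x)]
  -- key: for n ≥ m, if x ∈ G and Ω^(n+1) x = 0 then Ω^n x = 0
  have hkey : ∀ n ≥ m, ∀ x : ↥G, (Ω ^ (n+1)) (x : H) = 0 → (Ω ^ n) (x : H) = 0 := by
    intro n hn x hx
    have hfr : Module.finrank ℚ (Fin m → ℚ) = m := by simp
    have hker1 : LinearMap.ker (ψ ^ (n+1)) = LinearMap.ker (ψ ^ Module.finrank ℚ (Fin m → ℚ)) :=
      Module.End.ker_pow_eq_ker_pow_finrank_of_le (by omega)
    have hker2 : LinearMap.ker (ψ ^ n) = LinearMap.ker (ψ ^ Module.finrank ℚ (Fin m → ℚ)) :=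
      Module.End.ker_pow_eq_ker_pow_finrank_of_le (by omega)
    have hmem : incl (e x) ∈ LinearMap.ker (ψ ^ (n+1)) := by
      rw [LinearMap.mem_ker, hcommpow, hψ'pow]
      have : (φ ^ (n+1)) x = 0 := by
        apply Subtype.ext
        rw [hφpow]
        exact hx
      rw [this, map_zero]
      funext i
      simp [incl]
    have hmem' : incl (e x) ∈ LinearMap.ker (ψ ^ n) := by rw [hker2, ← hker1]; exact hmem
    rw [LinearMap.mem_ker, hcommpow, hψ'pow] at hmem'
    have h0 : incl (e ((0 : ↥G))) = 0 := by
      rw [map_zero]; funext i; simp [incl]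
    have := hincl_inj (hmem'.trans h0.symm)
    have := e.injective this
    have : (φ ^ n) x = 0 := this
    calc (Ω ^ n) (x : H) = ((φ ^ n) x : H) := (hφpow n x).symm
      _ = 0 := by rw [this]; rfl
  refine ⟨m, le_rfl, ?_⟩
  intro n hn a ha b' hb' hab
  obtain ⟨x, hxG, hxa⟩ := ha
  obtain ⟨y, hyG, hyb⟩ := hb'
  set z : ↥G := (⟨x, hxG⟩ : ↥G) - ⟨y, hyG⟩ with hz
  have hz1 : (Ω ^ (n+1)) (z : H) = 0 := by
    have : (z : H) = x - y := rfl
    rw [this, map_sub]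
    have h1 : (Ω ^ (n+1)) x = Ω ((Ω ^ n) x) := by rw [pow_succ']; rfl
    have h2 : (Ω ^ (n+1)) y = Ω ((Ω ^ n) y) := by rw [pow_succ']; rfl
    rw [h1, h2, show (Ω ^ n) x = a from hxa, show (Ω ^ n) y = b' from hyb, hab, sub_self]
  have hz0 := hkey n hn z hz1
  have : (z : H) = x - y := rfl
  rw [this, map_sub, show (Ω ^ n) x = a from hxa, show (Ω ^ n) y = b' from hyb] at hz0
  exact sub_eq_zero.mp hz0
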